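/- Let G be a graph containing disjoint ordered vertex sets X = {u^1,…,u^k} and X' = {v^1,…,v^k} forming a regular crossing (u^j v^{j'} ∈ E(G) iff j + j' ≥ k+1). Let (Y, Z) be a partition of V(G) of cut-rank less than r (r ≥ 2). Then X has fewer than 8r blocks with respect to (Y, Z). -/
import Mathlib



/-- The cut-rank of a partition `(Y, Yᶜ)` of the vertices of `G`: the GF(2)-rank
of the bipartite adjacency matrix with rows `Y` and columns `Yᶜ`. -/
noncomputable def cutRank {V : Type*} [Fintype V] (G : SimpleGraph V) (Y : Set V) : ℕ := by
  classical
  haveI : Fintype ↥Y := Fintype.ofFinite _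
  haveI : Fintype ↥(Yᶜ) := Fintype.ofFinite _
  exact (Matrix.of fun (y : Y) (z : ↥(Yᶜ)) =>
    if G.Adj y.1 z.1 then (1 : ZMod 2) else 0).rank

private lemma auxRank {m n : Type*} [Fintype m] [Fintype n] (M : Matrix m n (ZMod 2)) (s : ℕ)
    (f : Fin s → m) (g : Fin s → n)
    (h : ∀ a b : Fin s, M (f a) (g b) = if (b : ℕ) ≤ (a : ℕ) then 1 else 0) :
    s ≤ M.rank := by
  classical
  set P : Matrix (Fin s) m (ZMod 2) := Matrix.of fun a i => if i = f a then 1 else 0 with hP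
  set Q : Matrix n (Fin s) (ZMod 2) := Matrix.of fun j b => if j = g b then 1 else 0 with hQ
  have hPMQ : ∀ a b : Fin s, (P * M * Q) a b = if (b : ℕ) ≤ (a : ℕ) then 1 else 0 := by
    intro a b
    have h1 : ∀ j, (P * M) a j = M (f a) j := by
      intro j
      simp [Matrix.mul_apply, hP, ite_mul]
    rw [Matrix.mul_apply]
    simp only [h1, hQ, Matrix.of_apply, mul_ite, mul_one, mul_zero]
    rw [Finset.sum_ite_eq' Finset.univ (g b) (fun j => M (f a) j)]
    simp [h a b]
  have hdet : (P * M * Q).det = 1 := by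
    rw [Matrix.det_of_lowerTriangular (P * M * Q) ?_]
    · exact Finset.prod_eq_one (fun i _ => by rw [hPMQ i i]; simp)
    · intro i j hij
      rw [hPMQ]
      have : ¬ ((j : ℕ) ≤ (i : ℕ)) := by
        simp only [OrderDual.toDual_lt_toDual] at hij
        omega
      simp [this]
  have hrank : (P * M * Q).rank = s := by
    rw [Matrix.rank_of_isUnit _ ((Matrix.isUnit_iff_isUnit_det _).mpr (by rw [hdet]; exact isUnit_one))]
    simp
  calc s = (P * M * Q).rank := hrank.symm
    _ ≤ (P * M).rank := Matrix.rank_mul_le_left _ _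
    _ ≤ M.rank := Matrix.rank_mul_le_right _ _

private lemma cutRank_lower {V : Type*} [Fintype V] (G : SimpleGraph V) (Y : Set V) (s : ℕ)
    (f g : Fin s → V) (hf : ∀ a, f a ∈ Y) (hg : ∀ b, g b ∈ Yᶜ)
    (hadj : ∀ a b, G.Adj (f a) (g b) ↔ (b : ℕ) ≤ (a : ℕ)) :
    s ≤ cutRank G Y := by
  classical
  unfold cutRank
  refine @auxRank ↥Y ↥(Yᶜ) (Fintype.ofFinite _) (Fintype.ofFinite _) _ s
    (fun a => ⟨f a, hf a⟩) (fun b => ⟨g b, hg b⟩) ?_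
  intro a b
  by_cases hle : (b : ℕ) ≤ (a : ℕ) <;>
    simp [Matrix.of_apply, hle, (hadj a b), -SimpleGraph.irrefl]

private lemma case_bound {V : Type*} [Fintype V] (G : SimpleGraph V) {k : ℕ}
    (Y : Set V) (S : Finset (Fin k)) (row col : Fin k → V) (inc str : Bool)
    (hrow : ∀ i ∈ S, row i ∈ Y) (hcol : ∀ i ∈ S, col i ∈ Yᶜ)
    (hadj : ∀ i ∈ S, ∀ j ∈ S, (G.Adj (row i) (col j) ↔
      (if str then (if inc then (j : ℕ) < (i : ℕ) else (i : ℕ) < (j : ℕ))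
       else (if inc then (j : ℕ) ≤ (i : ℕ) else (i : ℕ) ≤ (j : ℕ))))) :
    S.card ≤ cutRank G Y + 1 := by
  classical
  obtain h0 | hpos := Nat.eq_zero_or_pos S.card
  · simp [h0]
  set t := S.card with ht
  set s := t - 1 with hs
  have hst : s + 1 = t := by omega
  let e : Fin t ≃o {x // x ∈ S} := S.orderIsoOfFin rfl
  let e' : Fin t → Fin k := fun x => (e x : Fin k)
  have hmem : ∀ x : Fin t, e' x ∈ S := fun x => (e x).2
  have hmono : StrictMono e' := fun x y hxy => Subtype.coe_lt_coe.mpr (e.lt_iff_lt.mpr hxy)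
  have hltn : ∀ x y : Fin t, ((e' x : ℕ) < (e' y : ℕ)) ↔ (x : ℕ) < (y : ℕ) := fun x y =>
    hmono.lt_iff_lt
  have hlen : ∀ x y : Fin t, ((e' x : ℕ) ≤ (e' y : ℕ)) ↔ (x : ℕ) ≤ (y : ℕ) := fun x y =>
    hmono.le_iff_le
  have key : s ≤ cutRank G Y := by
    cases inc <;> cases str
    -- inc = false, str = false : pattern i ≤ j
    · refine cutRank_lower G Y s (fun a => row (e' ⟨s - 1 - a, by omega⟩))
        (fun b => col (e' ⟨s - 1 - b, by omega⟩)) (fun a => hrow _ (hmem _))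
        (fun b => hcol _ (hmem _)) ?_
      intro a b
      rw [hadj _ (hmem _) _ (hmem _)]
      have ha := a.isLt
      have hb := b.isLt
      simp only [Bool.false_eq_true, eq_self_iff_true, if_true, if_false, hlen, hltn, Fin.val_mk]
      try omega
    -- inc = false, str = true : pattern i < j
    · refine cutRank_lower G Y s (fun a => row (e' ⟨s - 1 - a, by omega⟩))
        (fun b => col (e' ⟨s - b, by omega⟩)) (fun a => hrow _ (hmem _))
        (fun b => hcol _ (hmem _)) ?_
      intro a b
      rw [hadj _ (hmem _) _ (hmem _)]
      have ha := a.isLt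
      have hb := b.isLt
      simp only [Bool.false_eq_true, eq_self_iff_true, if_true, if_false, hlen, hltn, Fin.val_mk]
      try omega
    -- inc = true, str = false : pattern j ≤ i
    · refine cutRank_lower G Y s (fun a => row (e' ⟨(a : ℕ), by omega⟩))
        (fun b => col (e' ⟨(b : ℕ), by omega⟩)) (fun a => hrow _ (hmem _))
        (fun b => hcol _ (hmem _)) ?_
      intro a b
      rw [hadj _ (hmem _) _ (hmem _)]
      have ha := a.isLt
      have hb := b.isLt
      simp only [Bool.false_eq_true, eq_self_iff_true, if_true, if_false, hlen, hltn, Fin.val_mk]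
      try omega
    -- inc = true, str = true : pattern j < i
    · refine cutRank_lower G Y s (fun a => row (e' ⟨(a : ℕ) + 1, by omega⟩))
        (fun b => col (e' ⟨(b : ℕ), by omega⟩)) (fun a => hrow _ (hmem _))
        (fun b => hcol _ (hmem _)) ?_
      intro a b
      rw [hadj _ (hmem _) _ (hmem _)]
      have ha := a.isLt
      have hb := b.isLt
      simp only [Bool.false_eq_true, eq_self_iff_true, if_true, if_false, hlen, hltn, Fin.val_mk]
      try omega
  omega

open Classical in
/-- Let `G` contain disjoint ordered vertex sets `X = {u 0,…,u (k-1)}` and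
`X' = {v 0,…,v (k-1)}` forming a regular crossing (in 1-based indexing,
`u^j v^{j'} ∈ E(G)` iff `j + j' ≥ k + 1`).  Let `(Y, Yᶜ)` be a partition of
`V(G)` of cut-rank less than `r`, where `r ≥ 2`.  Then `X` has fewer than `8r`
blocks with respect to `(Y, Yᶜ)` — the number of blocks being the number of
consecutive membership changes along `X` plus one. -/
theorem stmt7 {V : Type*} [Fintype V] (G : SimpleGraph V) (k r : ℕ)
    (hk : 1 ≤ k) (hr : 2 ≤ r)
    (u v : Fin k → V)
    (hu : Function.Injective u) (hv : Function.Injective v)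
    (hdisj : Disjoint (Set.range u) (Set.range v))
    (hcross : ∀ p q : Fin k, G.Adj (u p) (v q) ↔ k ≤ (p : ℕ) + (q : ℕ) + 1)
    (Y : Set V) (hrank : cutRank G Y < r) :
    (Finset.univ.filter (fun i : Fin k =>
      ∃ h : (i : ℕ) + 1 < k,
        ¬ (u i ∈ Y ↔ u (⟨(i : ℕ) + 1, h⟩ : Fin k) ∈ Y))).card + 1 < 8 * r := by
  classical
  set B := Finset.univ.filter (fun i : Fin k =>
      ∃ h : (i : ℕ) + 1 < k,
        ¬ (u i ∈ Y ↔ u (⟨(i : ℕ) + 1, h⟩ : Fin k) ∈ Y)) with hB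
  have hBlt : ∀ i ∈ B, (i : ℕ) + 1 < k := by
    intro i hi
    exact ((Finset.mem_filter.mp hi).2).1
  set usucc : Fin k → Fin k := fun i => ⟨min ((i : ℕ) + 1) (k - 1), by omega⟩ with husucc_def
  have husucc_eq : ∀ (i : Fin k) (h : (i : ℕ) + 1 < k), usucc i = ⟨(i : ℕ) + 1, h⟩ := by
    intro i h
    apply Fin.ext
    simp [husucc_def]
    omega
  have husucc : ∀ i ∈ B, ¬ (u i ∈ Y ↔ u (usucc i) ∈ Y) := by
    intro i hi
    obtain ⟨h, hne⟩ := (Finset.mem_filter.mp hi).2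
    rw [husucc_eq i h]
    exact hne
  set c : Fin k → Fin k := fun i => ⟨k - 2 - (i : ℕ), by omega⟩ with hc_def
  have adjA : ∀ i j : Fin k, (j : ℕ) + 1 < k →
      (G.Adj (u i) (v (c j)) ↔ (j : ℕ) < (i : ℕ)) := by
    intro i j hj
    rw [hcross]
    simp only [hc_def]
    omega
  have adjB : ∀ i j : Fin k, (i : ℕ) + 1 < k → (j : ℕ) + 1 < k →
      (G.Adj (u (usucc i)) (v (c j)) ↔ (j : ℕ) ≤ (i : ℕ)) := by
    intro i j hi hj
    rw [hcross]
    simp only [hc_def, husucc_def]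
    omega
  set S1 := B.filter (fun i => u i ∈ Y ∧ v (c i) ∈ Y) with hS1
  set S2 := B.filter (fun i => u i ∈ Y ∧ ¬ (v (c i) ∈ Y)) with hS2
  set S3 := B.filter (fun i => ¬ (u i ∈ Y) ∧ v (c i) ∈ Y) with hS3
  set S4 := B.filter (fun i => ¬ (u i ∈ Y) ∧ ¬ (v (c i) ∈ Y)) with hS4
  have hsplit : B.card = S1.card + S2.card + S3.card + S4.card := by
    have h1 := Finset.card_filter_add_card_filter_not (s := B)
      (p := fun i => u i ∈ Y)
    have h2 : S1.card + S2.card = (B.filter (fun i => u i ∈ Y)).card := by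
      rw [hS1, hS2, ← Finset.filter_filter, ← Finset.filter_filter]
      exact Finset.card_filter_add_card_filter_not _
    have h3 : S3.card + S4.card = (B.filter (fun i => ¬ (u i ∈ Y))).card := by
      rw [hS3, hS4, ← Finset.filter_filter, ← Finset.filter_filter]
      exact Finset.card_filter_add_card_filter_not _
    omega
  -- bounds on the four pieces
  have b1 : S1.card ≤ cutRank G Y + 1 := by
    refine case_bound G Y S1 (fun i => v (c i)) (fun i => u (usucc i)) false false ?_ ?_ ?_
    · intro i hi
      exact ((Finset.mem_filter.mp hi).2).2
    · intro i hi
      obtain ⟨hiB, hYu, _⟩ := Finset.mem_filter.mp hi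
      have := husucc i hiB
      simp only [Set.mem_compl_iff]
      tauto
    · intro i hi j hj
      obtain ⟨hiB, _⟩ := Finset.mem_filter.mp hi
      obtain ⟨hjB, _⟩ := Finset.mem_filter.mp hj
      simp only [Bool.false_eq_true, if_false]
      rw [G.adj_comm]
      exact adjB j i (hBlt j hjB) (hBlt i hiB)
  have b2 : S2.card ≤ cutRank G Y + 1 := by
    refine case_bound G Y S2 (fun i => u i) (fun i => v (c i)) true true ?_ ?_ ?_
    · intro i hi
      exact ((Finset.mem_filter.mp hi).2).1
    · intro i hi
      exact ((Finset.mem_filter.mp hi).2).2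
    · intro i hi j hj
      obtain ⟨hjB, _⟩ := Finset.mem_filter.mp hj
      simp only [if_true]
      exact adjA i j (hBlt j hjB)
  have b3 : S3.card ≤ cutRank G Y + 1 := by
    refine case_bound G Y S3 (fun i => v (c i)) (fun i => u i) false true ?_ ?_ ?_
    · intro i hi
      exact ((Finset.mem_filter.mp hi).2).2
    · intro i hi
      exact ((Finset.mem_filter.mp hi).2).1
    · intro i hi j hj
      obtain ⟨hiB, _⟩ := Finset.mem_filter.mp hi
      simp only [Bool.false_eq_true, if_false, if_true]
      rw [G.adj_comm]
      exact adjA j i (hBlt i hiB)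
  have b4 : S4.card ≤ cutRank G Y + 1 := by
    refine case_bound G Y S4 (fun i => u (usucc i)) (fun i => v (c i)) true false ?_ ?_ ?_
    · intro i hi
      obtain ⟨hiB, hYu, _⟩ := Finset.mem_filter.mp hi
      have := husucc i hiB
      tauto
    · intro i hi
      exact ((Finset.mem_filter.mp hi).2).2
    · intro i hi j hj
      obtain ⟨hiB, _⟩ := Finset.mem_filter.mp hi
      obtain ⟨hjB, _⟩ := Finset.mem_filter.mp hj
      simp only [Bool.false_eq_true, if_false, if_true]
      exact adjB i j (hBlt i hiB) (hBlt j hjB)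
  omega
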